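/- Let U(t,x) = A(t)(R(t)² − x²)^α on {|x| < R(t)}, where R(t) = R₀ + t with R₀ > 0, α > 0, and A : [0,∞) → (0,∞) is C¹ with A'(t) ≥ 0. Then U is a (classical) supersolution of u_t = (u u_x/√(u²+u_x²))_x on the open set {(t,x) : |x| < R(t)}, i.e. U_t ≥ ∂_x( U U_x/√(U²+U_x²) ) pointwise there. -/

import Mathlib

open Real

/-- Algebraic identity for the flux simplification. -/
lemma flux_eq (a α P y : ℝ) (ha : 0 < a) (hP : 0 < P) :
    (a * P ^ α) * (a * (-(2*y) * α * P ^ (α-1))) /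
      Real.sqrt ((a * P ^ α) ^ 2 + (a * (-(2*y) * α * P ^ (α-1))) ^ 2)
    = -(2*a*α) * (y * P ^ α / Real.sqrt (P ^ 2 + (2*α*y) ^ 2)) := by
  have hc : 0 < P ^ (α-1) := Real.rpow_pos_of_pos hP _
  have hPα : P ^ α = P ^ (α-1) * P := by
    rw [← Real.rpow_add_one hP.ne' (α-1)]; ring_nf
  have hs : 0 < P ^ 2 + (2*α*y) ^ 2 :=
    add_pos_of_pos_of_nonneg (pow_pos hP 2) (sq_nonneg _)
  have e1 : (a * P ^ α) ^ 2 + (a * (-(2*y) * α * P ^ (α-1))) ^ 2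
      = (a * P ^ (α-1)) ^ 2 * (P ^ 2 + (2*α*y) ^ 2) := by
    rw [hPα]; ring
  have e2 : Real.sqrt ((a * P ^ α) ^ 2 + (a * (-(2*y) * α * P ^ (α-1))) ^ 2)
      = (a * P ^ (α-1)) * Real.sqrt (P ^ 2 + (2*α*y) ^ 2) := by
    rw [e1, Real.sqrt_mul (sq_nonneg _), Real.sqrt_sq (mul_pos ha hc).le]
  rw [e2, hPα]
  have hne : Real.sqrt (P ^ 2 + (2*α*y) ^ 2) ≠ 0 := (Real.sqrt_pos.mpr hs).ne'
  field_simp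

lemma frac_eq (N' N h' q S : ℝ) (hq : 0 < q) (hq2 : q ^ 2 = S) :
    (N' * q - N * (h' / (2*q))) / q ^ 2 = (2*N'*S - N*h') / (2*q*S) := by
  subst hq2; field_simp

set_option maxHeartbeats 1000000 in
theorem supersolution_RHE (R₀ α : ℝ) (hR₀ : 0 < R₀) (hα : 0 < α)
    (A : ℝ → ℝ) (hA : ContDiff ℝ 1 A) (hApos : ∀ t, 0 < A t)
    (hA' : ∀ t, 0 ≤ deriv A t)
    (U : ℝ → ℝ → ℝ)
    (hU : U = fun t x => A t * ((R₀ + t) ^ 2 - x ^ 2) ^ α) :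
    ∀ t x : ℝ, 0 ≤ t → |x| < R₀ + t →
      deriv (fun s => U s x) t ≥
        deriv (fun y => U t y * deriv (U t) y /
          Real.sqrt ((U t y) ^ 2 + (deriv (U t) y) ^ 2)) x := by
  subst hU
  intro t x ht hx
  have hRpos : 0 < R₀ + t := by linarith
  have hP : 0 < (R₀+t) ^ 2 - x ^ 2 := by nlinarith [sq_abs x, abs_nonneg x]
  have ha : 0 < A t := hApos t
  -- spatial derivative of U t at every point where the base is positive
  have hUy : ∀ y : ℝ, 0 < (R₀+t) ^ 2 - y ^ 2 →
      HasDerivAt (fun z => A t * ((R₀+t) ^ 2 - z ^ 2) ^ α)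
        (A t * (-(2*y) * α * ((R₀+t) ^ 2 - y ^ 2) ^ (α-1))) y := by
    intro y hy
    have h1 : HasDerivAt (fun z : ℝ => (R₀+t) ^ 2 - z ^ 2) (-(2*y)) y := by
      have h := HasDerivAt.const_sub ((R₀+t) ^ 2) (hasDerivAt_pow 2 y)
      exact h.congr_deriv (by norm_num)
    exact (h1.rpow_const (Or.inl hy.ne')).const_mul (A t)
  -- time derivative
  have hb : HasDerivAt (fun s : ℝ => (R₀+s) ^ 2 - x ^ 2) (2*(R₀+t)) t := by
    have h1 : HasDerivAt (fun s : ℝ => R₀ + s) 1 t := (hasDerivAt_id t).const_add R₀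
    have h2 := (h1.pow 2).sub_const (x ^ 2)
    exact h2.congr_deriv (by norm_num)
  have hLd : HasDerivAt (fun s => A s * ((R₀+s) ^ 2 - x ^ 2) ^ α)
      (deriv A t * ((R₀+t) ^ 2 - x ^ 2) ^ α
        + A t * (2*(R₀+t) * α * ((R₀+t) ^ 2 - x ^ 2) ^ (α-1))) t :=
    ((hA.differentiable one_ne_zero) t).hasDerivAt.mul (hb.rpow_const (Or.inl hP.ne'))
  -- eventual equality of the flux with a clean closed form
  have hS : ∀ᶠ y in nhds x, 0 < (R₀+t) ^ 2 - y ^ 2 := by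
    have hop : IsOpen {y : ℝ | 0 < (R₀+t) ^ 2 - y ^ 2} :=
      isOpen_lt continuous_const (continuous_const.sub (continuous_pow 2))
    exact hop.mem_nhds hP
  have hflux : (fun y => (fun z => A t * ((R₀+t) ^ 2 - z ^ 2) ^ α) y
        * deriv (fun z => A t * ((R₀+t) ^ 2 - z ^ 2) ^ α) y /
        Real.sqrt (((fun z => A t * ((R₀+t) ^ 2 - z ^ 2) ^ α) y) ^ 2
          + (deriv (fun z => A t * ((R₀+t) ^ 2 - z ^ 2) ^ α) y) ^ 2))
      =ᶠ[nhds x] (fun y => -(2*(A t)*α) *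
        (y * ((R₀+t) ^ 2 - y ^ 2) ^ α /
          Real.sqrt (((R₀+t) ^ 2 - y ^ 2) ^ 2 + (2*α*y) ^ 2))) := by
    filter_upwards [hS] with y hy
    rw [(hUy y hy).deriv]
    exact flux_eq (A t) α _ y ha hy
  -- derivative of the closed form
  have hb2 : HasDerivAt (fun y : ℝ => (R₀+t) ^ 2 - y ^ 2) (-(2*x)) x := by
    have h := HasDerivAt.const_sub ((R₀+t) ^ 2) (hasDerivAt_pow 2 x)
    exact h.congr_deriv (by norm_num)
  have hN : HasDerivAt (fun y => y * ((R₀+t) ^ 2 - y ^ 2) ^ α)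
      (1 * ((R₀+t) ^ 2 - x ^ 2) ^ α
        + x * (-(2*x) * α * ((R₀+t) ^ 2 - x ^ 2) ^ (α-1))) x :=
    (hasDerivAt_id' x).mul (hb2.rpow_const (Or.inl hP.ne'))
  have hs : 0 < ((R₀+t) ^ 2 - x ^ 2) ^ 2 + (2*α*x) ^ 2 :=
    add_pos_of_pos_of_nonneg (pow_pos hP 2) (sq_nonneg _)
  have hh : HasDerivAt (fun y => ((R₀+t) ^ 2 - y ^ 2) ^ 2 + (2*α*y) ^ 2)
      ((2:ℕ) * ((R₀+t) ^ 2 - x ^ 2) ^ (2-1) * (-(2*x))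
        + (2:ℕ) * (2*α*x) ^ (2-1) * (2*α*1)) x :=
    (hb2.pow 2).add (((hasDerivAt_id' x).const_mul (2*α)).pow 2)
  have hQ : HasDerivAt (fun y => Real.sqrt (((R₀+t) ^ 2 - y ^ 2) ^ 2 + (2*α*y) ^ 2))
      (((2:ℕ) * ((R₀+t) ^ 2 - x ^ 2) ^ (2-1) * (-(2*x))
        + (2:ℕ) * (2*α*x) ^ (2-1) * (2*α*1)) /
        (2 * Real.sqrt (((R₀+t) ^ 2 - x ^ 2) ^ 2 + (2*α*x) ^ 2))) x :=
    hh.sqrt hs.ne'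
  have hqpos : 0 < Real.sqrt (((R₀+t) ^ 2 - x ^ 2) ^ 2 + (2*α*x) ^ 2) :=
    Real.sqrt_pos.mpr hs
  have hG := (hN.fun_div hQ hqpos.ne').const_mul (-(2*(A t)*α))
  rw [hLd.deriv, hflux.deriv_eq, hG.deriv]
  set q := Real.sqrt (((R₀+t) ^ 2 - x ^ 2) ^ 2 + (2*α*x) ^ 2) with hqdef
  have hq2 : q ^ 2 = ((R₀+t) ^ 2 - x ^ 2) ^ 2 + (2*α*x) ^ 2 := Real.sq_sqrt hs.le
  have hqx : 2*α*|x| ≤ q := by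
    have h1 : Real.sqrt ((2*α*x) ^ 2) ≤ q :=
      Real.sqrt_le_sqrt (by nlinarith [sq_nonneg ((R₀+t) ^ 2 - x ^ 2)])
    have h2 : Real.sqrt ((2*α*x) ^ 2) = 2*α*|x| := by
      rw [Real.sqrt_sq_eq_abs, abs_mul, abs_of_pos (by positivity : (0:ℝ) < 2*α)]
    linarith [h2 ▸ h1]
  rw [ge_iff_le]
  rw [frac_eq _ _ _ q _ hqpos hq2, ← mul_div_assoc,
    div_le_iff₀ (mul_pos (mul_pos two_pos hqpos) hs)]
  have hPα : ((R₀+t) ^ 2 - x ^ 2) ^ α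
      = ((R₀+t) ^ 2 - x ^ 2) ^ (α-1) * ((R₀+t) ^ 2 - x ^ 2) := by
    rw [← Real.rpow_add_one hP.ne' (α-1)]; ring_nf
  rw [hPα]
  have hc : 0 < ((R₀+t) ^ 2 - x ^ 2) ^ (α-1) := Real.rpow_pos_of_pos hP _
  push_cast
  norm_num
  -- abbreviations
  set R : ℝ := R₀ + t with hR
  set c : ℝ := (R ^ 2 - x ^ 2) ^ (α-1) with hcdef
  set S : ℝ := (R ^ 2 - x ^ 2) ^ 2 + (2*α*x) ^ 2 with hSdef
  have s1 : 2*α*|x| * S ≤ q * S := mul_le_mul_of_nonneg_right hqx hs.le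
  have s2 : |x| * (2*α*|x| * S) ≤ |x| * (q*S) := mul_le_mul_of_nonneg_left s1 (abs_nonneg x)
  have s3 : |x| * (q*S) ≤ R*(q*S) := mul_le_mul_of_nonneg_right hx.le (mul_nonneg hqpos.le hs.le)
  have e : |x| * (2*α*|x| * S) = 2*α*x ^ 2*S := by
    calc |x| * (2*α*|x| * S) = 2*α*(|x| * |x|)*S := by ring
      _ = 2*α*(x*x)*S := by rw [abs_mul_abs_self x]
      _ = 2*α*x ^ 2*S := by ring
  have key : 8*α ^ 3*x ^ 4 + 2*α*x ^ 2*(R ^ 2 - x ^ 2) ^ 2 ≤ R*(q*S) := by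
    have : 2*α*x ^ 2*S = 8*α ^ 3*x ^ 4 + 2*α*x ^ 2*(R ^ 2 - x ^ 2) ^ 2 := by
      rw [hSdef]; ring
    linarith [s2, s3, e]
  have h4 : 0 < 4*(A t)*α*c := by
    have := mul_pos (mul_pos (mul_pos (by norm_num : (0:ℝ) < 4) ha) hα) hc
    exact this
  have T1 : 0 ≤ deriv A t * (c*((R ^ 2 - x ^ 2)*(q*S))) :=
    mul_nonneg (hA' t) (mul_nonneg hc.le (mul_nonneg hP.le (mul_nonneg hqpos.le hs.le)))
  have T2 := mul_le_mul_of_nonneg_left key h4.le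
  have T3 : 0 ≤ 4*(A t)*α*c*((R ^ 2 - x ^ 2) ^ 3 + 2*x ^ 2*(R ^ 2 - x ^ 2) ^ 2) := by
    have h5 : (0:ℝ) ≤ (R ^ 2 - x ^ 2) ^ 3 + 2*x ^ 2*(R ^ 2 - x ^ 2) ^ 2 := by
      have := pow_pos hP 3
      have := mul_nonneg (mul_nonneg (by norm_num : (0:ℝ) ≤ 2) (sq_nonneg x)) (sq_nonneg (R ^ 2 - x ^ 2))
      linarith
    exact mul_nonneg h4.le h5
  simp only [hSdef] at T1 T2 T3 ⊢
  nlinarith [T1, T2, T3]
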